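/- If a matrix pair (A,B) with equal diagonals is pairwise completely positive, i.e., A = Σ_n |v_n⊙ v̄_n⟩⟨w_n⊙ w̄_n| and B = Σ_n |v_n⊙ w_n⟩⟨v_n⊙ w_n| for vectors v_n, w_n ∈ ℂ^d, then A has nonnegative entries, B is positive semidefinite, and A_{ij}A_{ji} ≥ |B_{ij}|² for all i, j. -/

import Mathlib

open Matrix Finset
open scoped ComplexOrder

/-- If `(A,B)` (equal diagonals) is pairwise completely positive, then `A` has
nonnegative (real) entries, `B` is positive semidefinite, and `A_{ij}A_{ji} ≥ |B_{ij}|²`. -/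
theorem pcp_necessary_conditions {d : ℕ}
    (A B : Matrix (Fin d) (Fin d) ℂ) (hdiag : ∀ i, A i i = B i i)
    (N : ℕ) (v w : Fin N → Fin d → ℂ)
    (hA : A = ∑ n, vecMulVec (fun i => v n i * star (v n i))
                    (star fun j => w n j * star (w n j)))
    (hB : B = ∑ n, vecMulVec (fun i => v n i * w n i)
                    (star fun j => v n j * w n j)) :
    (∀ i j, (A i j).im = 0 ∧ 0 ≤ (A i j).re) ∧
    B.PosSemidef ∧
    (∀ i j, ‖B i j‖ ^ 2 ≤ (A i j).re * (A j i).re) := by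
  have hAentry : ∀ i j, A i j
      = ((∑ n, Complex.normSq (v n i) * Complex.normSq (w n j) : ℝ) : ℂ) := by
    intro i j
    rw [hA]
    push_cast
    simp only [Matrix.sum_apply, vecMulVec_apply, Pi.star_apply]
    refine Finset.sum_congr rfl fun n _ => ?_
    have h1 : v n i * star (v n i) = (Complex.normSq (v n i) : ℂ) := Complex.mul_conj _
    have h2 : w n j * star (w n j) = (Complex.normSq (w n j) : ℂ) := Complex.mul_conj _
    rw [h1, h2]
    simp [Complex.conj_ofReal]
  refine ⟨?_, ?_, ?_⟩
  · intro i j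
    rw [hAentry i j]
    constructor
    · simp
    · simp only [Complex.ofReal_re]
      exact Finset.sum_nonneg fun n _ =>
        mul_nonneg (Complex.normSq_nonneg _) (Complex.normSq_nonneg _)
  · rw [hB]
    refine Finset.sum_induction _ _ (fun a b ha hb => ha.add hb)
      ⟨Matrix.isHermitian_zero, fun x => by simp⟩ (fun n _ => ?_)
    have : vecMulVec (fun i => v n i * w n i) (star fun j => v n j * w n j)
        = (Matrix.replicateCol Unit (fun i => v n i * w n i))
          * (Matrix.replicateCol Unit (fun i => v n i * w n i))ᴴ := by
      rw [Matrix.conjTranspose_replicateCol, ← Matrix.vecMulVec_eq]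
    rw [this]
    exact Matrix.posSemidef_self_mul_conjTranspose _
  · intro i j
    set a : Fin N → ℝ := fun n => ‖v n i‖ * ‖w n j‖ with ha
    set b : Fin N → ℝ := fun n => ‖v n j‖ * ‖w n i‖ with hb
    have habs : ‖B i j‖ ≤ ∑ n, a n * b n := by
      rw [hB]
      simp only [Matrix.sum_apply, vecMulVec_apply, Pi.star_apply]
      refine (norm_sum_le _ _).trans_eq ?_
      refine Finset.sum_congr rfl fun n _ => ?_
      simp only [RCLike.star_def, norm_mul, Complex.norm_conj, ha, hb]
      ring
    have hsum_nonneg : 0 ≤ ∑ n, a n * b n :=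
      Finset.sum_nonneg fun n _ => mul_nonneg
        (mul_nonneg (norm_nonneg _) (norm_nonneg _))
        (mul_nonneg (norm_nonneg _) (norm_nonneg _))
    have h1 : ‖B i j‖ ^ 2 ≤ (∑ n, a n * b n) ^ 2 :=
      pow_le_pow_left₀ (norm_nonneg _) habs 2
    have h2 := Finset.sum_mul_sq_le_sq_mul_sq Finset.univ a b
    have hAij : (A i j).re = ∑ n, a n ^ 2 := by
      rw [hAentry i j]
      simp only [Complex.ofReal_re]
      refine Finset.sum_congr rfl fun n _ => ?_
      simp [ha, Complex.normSq_eq_norm_sq]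
      ring
    have hAji : (A j i).re = ∑ n, b n ^ 2 := by
      rw [hAentry j i]
      simp only [Complex.ofReal_re]
      refine Finset.sum_congr rfl fun n _ => ?_
      simp [hb, Complex.normSq_eq_norm_sq]
      ring
    rw [hAij, hAji]
    exact h1.trans h2
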